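/- Suppose n^{MC}(ε,s) = ⌈C_s ε^{-2}⌉ with C_s = max_{1 ≤ m ≤ s} ∏_{j=1}^m γ_j for a nonincreasing positive sequence {γ_j}. Then lim_{s+ε^{-1}→∞} log(n^{MC}(ε,s))/(s + ε^{-1}) = 0 (weak tractability) if and only if lim_{s→∞} (∑_{j=1}^s max(log γ_j, 0))/s = 0. -/
import Mathlib


open Real Filter

/-- `C_s = max_{1 ≤ m ≤ s} ∏_{j=1}^m γ_j` (with `γ j` standing for `γ_{j+1}`). -/
noncomputable def Cmax (γ : ℕ → ℝ) (s : ℕ) : ℝ :=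
  sSup {v : ℝ | ∃ m : ℕ, 1 ≤ m ∧ m ≤ s ∧ v = ∏ j ∈ Finset.range m, γ j}

lemma prod_eq_exp_aux (γ : ℕ → ℝ) (hpos : ∀ j, 0 < γ j) (m : ℕ) :
    ∏ j ∈ Finset.range m, γ j = Real.exp (∑ j ∈ Finset.range m, Real.log (γ j)) := by
  rw [Real.exp_sum]
  exact Finset.prod_congr rfl fun j _ => (Real.exp_log (hpos j)).symm

lemma cmax_eq_aux (γ : ℕ → ℝ) (hpos : ∀ j, 0 < γ j) (hmono : Antitone γ)
    (s : ℕ) (hs : 1 ≤ s) :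
    Cmax γ s = Real.exp (Real.log (γ 0) +
      ∑ j ∈ Finset.Ico 1 s, max (Real.log (γ j)) 0) := by
  set R := Real.log (γ 0) + ∑ j ∈ Finset.Ico 1 s, max (Real.log (γ j)) 0 with hR
  have hsum0 : ∀ m : ℕ, 1 ≤ m → ∑ j ∈ Finset.range m, Real.log (γ j)
      = Real.log (γ 0) + ∑ j ∈ Finset.Ico 1 m, Real.log (γ j) := by
    intro m hm
    rw [Finset.range_eq_Ico, Finset.sum_eq_sum_Ico_succ_bot (by omega : 0 < m)]
  have hub : ∀ v ∈ {v : ℝ | ∃ m : ℕ, 1 ≤ m ∧ m ≤ s ∧ v = ∏ j ∈ Finset.range m, γ j},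
      v ≤ Real.exp R := by
    rintro v ⟨m, h1, h2, rfl⟩
    rw [prod_eq_exp_aux γ hpos]
    apply Real.exp_le_exp.2
    rw [hsum0 m h1, hR]
    have hA : ∑ j ∈ Finset.Ico 1 m, Real.log (γ j)
        ≤ ∑ j ∈ Finset.Ico 1 m, max (Real.log (γ j)) 0 :=
      Finset.sum_le_sum fun j _ => le_max_left _ _
    have hB : ∑ j ∈ Finset.Ico 1 m, max (Real.log (γ j)) 0
        ≤ ∑ j ∈ Finset.Ico 1 s, max (Real.log (γ j)) 0 :=
      Finset.sum_le_sum_of_subset_of_nonneg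
        (Finset.Ico_subset_Ico le_rfl h2) (fun j _ _ => le_max_right _ _)
    linarith
  have hmem : ∃ m : ℕ, 1 ≤ m ∧ m ≤ s ∧
      ∑ j ∈ Finset.range m, Real.log (γ j) = R := by
    rw [hR]; clear hR hub hsum0
    induction s, hs using Nat.le_induction with
    | base => exact ⟨1, le_refl 1, le_refl 1, by simp⟩
    | succ s hs ih =>
      rcases le_or_gt 0 (Real.log (γ s)) with hL | hL
      · refine ⟨s + 1, by omega, le_refl _, ?_⟩
        have hall : ∀ j ∈ Finset.Ico 1 (s + 1),
            max (Real.log (γ j)) 0 = Real.log (γ j) := by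
          intro j hj
          have hj' : j ≤ s := by
            simp only [Finset.mem_Ico] at hj; omega
          exact max_eq_left (hL.trans (Real.log_le_log (hpos s) (hmono hj')))
        have h1' : ∑ j ∈ Finset.Ico 1 (s + 1), max (Real.log (γ j)) 0
            = ∑ j ∈ Finset.Ico 1 (s + 1), Real.log (γ j) :=
          Finset.sum_congr rfl hall
        rw [h1', Finset.range_eq_Ico,
          Finset.sum_eq_sum_Ico_succ_bot (Nat.succ_pos s)]
      · obtain ⟨m, h1, h2, hm⟩ := ih
        refine ⟨m, h1, by omega, ?_⟩
        rw [Finset.sum_Ico_succ_top hs, max_eq_right hL.le, add_zero, hm]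
  obtain ⟨m, h1, h2, hm⟩ := hmem
  apply le_antisymm
  · exact csSup_le ⟨∏ j ∈ Finset.range 1, γ j, 1, le_refl 1, hs, rfl⟩ hub
  · refine le_csSup ⟨Real.exp R, hub⟩ ?_
    exact ⟨m, h1, h2, by rw [prod_eq_exp_aux γ hpos m, hm]⟩

lemma cmax_pos_aux (γ : ℕ → ℝ) (hpos : ∀ j, 0 < γ j) (hmono : Antitone γ)
    (s : ℕ) (hs : 1 ≤ s) : 0 < Cmax γ s := by
  rw [cmax_eq_aux γ hpos hmono s hs]; exact Real.exp_pos _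

lemma log_cmax_aux (γ : ℕ → ℝ) (hpos : ∀ j, 0 < γ j) (hmono : Antitone γ)
    (s : ℕ) (hs : 1 ≤ s) :
    Real.log (Cmax γ s) = (∑ j ∈ Finset.range s, max (Real.log (γ j)) 0) +
      min (Real.log (γ 0)) 0 := by
  rw [cmax_eq_aux γ hpos hmono s hs, Real.log_exp, Finset.range_eq_Ico,
    Finset.sum_eq_sum_Ico_succ_bot (by omega : 0 < s)]
  have h := max_add_min (Real.log (γ 0)) 0
  simp only [zero_add]
  linarith

/-- with `n^{MC}(ε,s) = ⌈C_s ε^{-2}⌉`, weak tractability, i.e.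
`log(n^{MC}(ε,s))/(s + ε^{-1}) → 0` as `s + ε^{-1} → ∞`, holds iff
`(∑_{j=1}^s max(log γ_j, 0))/s → 0`. -/
theorem weak_tractability_iff (γ : ℕ → ℝ) (hpos : ∀ j, 0 < γ j)
    (hmono : Antitone γ) :
    ((∀ δ : ℝ, 0 < δ → ∃ M : ℝ, ∀ s : ℕ, 1 ≤ s → ∀ ε : ℝ, ε ∈ Set.Ioo (0 : ℝ) 1 →
        M ≤ (s : ℝ) + ε⁻¹ →
        Real.log (⌈Cmax γ s * ε⁻¹ ^ 2⌉₊ : ℝ) / ((s : ℝ) + ε⁻¹) < δ) ↔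
      Tendsto (fun s : ℕ =>
        (∑ j ∈ Finset.range s, max (Real.log (γ j)) 0) / s) atTop (nhds 0)) := by
  set T : ℕ → ℝ := fun s => ∑ j ∈ Finset.range s, max (Real.log (γ j)) 0 with hT
  have hTnonneg : ∀ s, 0 ≤ T s := fun s =>
    Finset.sum_nonneg fun j _ => le_max_right _ _
  have hTmono : Monotone T := fun a b hab =>
    Finset.sum_le_sum_of_subset_of_nonneg (Finset.range_subset_range.2 hab)
      (fun j _ _ => le_max_right _ _)
  set c := min (Real.log (γ 0)) 0 with hc
  have hc0 : c ≤ 0 := min_le_right _ _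
  have hlogC : ∀ s : ℕ, 1 ≤ s → Real.log (Cmax γ s) = T s + c := fun s hs =>
    log_cmax_aux γ hpos hmono s hs
  constructor
  · -- weak tractability → sum condition
    intro H
    rw [Metric.tendsto_atTop]
    intro δ hδ
    obtain ⟨M, hM⟩ := H (δ / 2) (by positivity)
    refine ⟨max 1 (max ⌈M⌉₊ ⌈2 * (δ - c) / δ⌉₊), ?_⟩
    intro s hs
    have hs1 : 1 ≤ s := le_trans (le_max_left _ _) hs
    have hsM : M ≤ (s : ℝ) := by
      have : (⌈M⌉₊ : ℝ) ≤ (s : ℝ) := by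
        exact_mod_cast le_trans (le_trans (le_max_left _ _) (le_max_right _ _)) hs
      exact le_trans (Nat.le_ceil M) this
    have hsd : 2 * (δ - c) / δ ≤ (s : ℝ) := by
      have : (⌈2 * (δ - c) / δ⌉₊ : ℝ) ≤ (s : ℝ) := by
        exact_mod_cast le_trans (le_trans (le_max_right _ _) (le_max_right _ _)) hs
      exact le_trans (Nat.le_ceil _) this
    have hsd' : 2 * (δ - c) ≤ (s : ℝ) * δ := (div_le_iff₀ hδ).1 hsd
    have h2 : ((1 / 2 : ℝ))⁻¹ = 2 := by norm_num
    have key := hM s hs1 (1 / 2) ⟨by norm_num, by norm_num⟩ (by rw [h2]; linarith)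
    rw [h2] at key
    have h4 : (2 : ℝ) ^ 2 = 4 := by norm_num
    rw [h4] at key
    have hCpos := cmax_pos_aux γ hpos hmono s hs1
    have hx : (0 : ℝ) < Cmax γ s * 4 := by positivity
    have hle : Real.log (Cmax γ s * 4) ≤ Real.log (⌈Cmax γ s * 4⌉₊ : ℝ) :=
      Real.log_le_log hx (Nat.le_ceil _)
    have hden : (0 : ℝ) < (s : ℝ) + 2 := by positivity
    have key2 : Real.log (Cmax γ s * 4) < δ / 2 * ((s : ℝ) + 2) := by
      have := lt_of_le_of_lt ((div_le_div_iff_of_pos_right hden).2 hle) key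
      exact (div_lt_iff₀ hden).1 this
    rw [Real.log_mul (ne_of_gt hCpos) (by norm_num), hlogC s hs1] at key2
    have hlog4 : 0 ≤ Real.log 4 := Real.log_nonneg (by norm_num)
    have hspos : (0 : ℝ) < s := by
      exact_mod_cast Nat.lt_of_lt_of_le Nat.zero_lt_one hs1
    rw [Real.dist_eq, sub_zero, abs_of_nonneg (div_nonneg (hTnonneg s) hspos.le),
      div_lt_iff₀ hspos]
    linarith [key2, hsd', hlog4, hc0]
  · -- sum condition → weak tractability
    intro H δ hδ
    obtain ⟨N, hN⟩ := (Metric.tendsto_atTop.1 H) (δ / 8) (by positivity)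
    set N' := max N 1 with hN'
    set K := T N' with hK
    have hK0 : 0 ≤ K := hTnonneg N'
    have hTK : ∀ s : ℕ, 1 ≤ s → T s ≤ δ / 8 * s + K := by
      intro s hs1
      have hspos : (0 : ℝ) < s := by
        exact_mod_cast Nat.lt_of_lt_of_le Nat.zero_lt_one hs1
      rcases le_or_gt N' s with h | h
      · have hd := hN s (le_trans (le_max_left N 1) h)
        rw [Real.dist_eq, sub_zero,
          abs_of_nonneg (div_nonneg (hTnonneg s) hspos.le), div_lt_iff₀ hspos] at hd
        linarith
      · have := hTmono h.le
        have : T s ≤ K := this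
        nlinarith [hspos, hδ]
    set B := (-1 : ℝ) - Real.log (δ / 8) with hB
    set C := Real.log 2 + K + 2 * B with hC
    refine ⟨max 1 (4 * (|C| + 1) / δ), ?_⟩
    intro s hs1 ε hε hM
    obtain ⟨hε0, hε1⟩ := hε
    have hinv1 : 1 < ε⁻¹ := (one_lt_inv₀ hε0).2 hε1
    have hinv0 : (0 : ℝ) < ε⁻¹ := inv_pos.2 hε0
    have hs0 : (1 : ℝ) ≤ (s : ℝ) := by exact_mod_cast hs1
    have hD : (0 : ℝ) < (s : ℝ) + ε⁻¹ := by linarith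
    have hCpos := cmax_pos_aux γ hpos hmono s hs1
    set x := Cmax γ s * ε⁻¹ ^ 2 with hxdef
    have hx : 0 < x := by positivity
    have hceilpos : (0 : ℝ) < (⌈x⌉₊ : ℝ) := by
      exact_mod_cast Nat.ceil_pos.2 hx
    have h1 : Real.log (⌈x⌉₊ : ℝ) ≤ Real.log (x + 1) :=
      Real.log_le_log hceilpos (Nat.ceil_lt_add_one hx.le).le
    have h2 : Real.log (x + 1) ≤ Real.log 2 + max (Real.log x) 0 := by
      rcases le_or_gt x 1 with h | h
      · have h' : Real.log (x + 1) ≤ Real.log 2 :=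
          Real.log_le_log (by linarith) (by linarith)
        have := le_max_right (Real.log x) 0
        linarith
      · have hlx : 0 ≤ Real.log x := Real.log_nonneg h.le
        have h' : Real.log (x + 1) ≤ Real.log (2 * x) :=
          Real.log_le_log (by linarith) (by linarith)
        rw [Real.log_mul two_ne_zero (ne_of_gt hx)] at h'
        rw [max_eq_left hlx]
        linarith
    have h3 : Real.log x = Real.log (Cmax γ s) + 2 * Real.log ε⁻¹ := by
      rw [hxdef, Real.log_mul (ne_of_gt hCpos) (by positivity), Real.log_pow]
      push_cast; ring
    have hlinv : 0 < Real.log ε⁻¹ := Real.log_pos hinv1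
    have h4 : max (Real.log x) 0 ≤ T s + 2 * Real.log ε⁻¹ := by
      apply max_le
      · rw [h3, hlogC s hs1]; linarith
      · have := hTnonneg s; linarith
    have h5 : Real.log ε⁻¹ ≤ δ / 8 * ε⁻¹ + B := by
      have hp : (0 : ℝ) < δ / 8 * ε⁻¹ := by positivity
      have := Real.log_le_sub_one_of_pos hp
      rw [Real.log_mul (by positivity) (by positivity)] at this
      rw [hB]; linarith
    have h6 := hTK s hs1
    have hds : 0 ≤ δ * (s : ℝ) := by positivity
    have h7 : Real.log (⌈x⌉₊ : ℝ) ≤ C + δ / 4 * ((s : ℝ) + ε⁻¹) := by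
      rw [hC]; linarith [h1, h2, h4, h5, h6, hds]
    have h8 : 4 * (|C| + 1) ≤ δ * ((s : ℝ) + ε⁻¹) := by
      have hm' : 4 * (|C| + 1) / δ ≤ (s : ℝ) + ε⁻¹ :=
        le_trans (le_max_right _ _) hM
      have := (div_le_iff₀ hδ).1 hm'
      linarith
    rw [div_lt_iff₀ hD]
    linarith [le_abs_self C, abs_nonneg C, h7, h8]
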